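/- Let $k$ be a field and let $\varphi$ be a homogeneous polynomial of degree $d$ in $N+1$ variables over $k$, where $d \geq 3$ is a prime number. Suppose that $\varphi$ is isotropic over some finite field extension $K/k$ whose degree $n := [K:k] \geq 2$ is prime with $n \neq d$. Then there exists a finite field extension $L/k$ with $\gcd([L:k], nd) = 1$ and $[L:k] \leq nd-n-d$ such that $\varphi$ is isotropic over $L$. -/

import Mathlib

open Polynomial

namespace MainThmAux

variable {k : Type} [Field k]

lemma coeff_mul_of_natDegree_le {p q : k[X]} {a b : ℕ}
    (hp : p.natDegree ≤ a) (hq : q.natDegree ≤ b) :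
    (p * q).coeff (a + b) = p.coeff a * q.coeff b := by
  rcases lt_or_eq_of_le hp with hpa | hpa
  · rw [coeff_eq_zero_of_natDegree_lt hpa, zero_mul, coeff_eq_zero_of_natDegree_lt]
    exact lt_of_le_of_lt natDegree_mul_le (by omega)
  · rcases lt_or_eq_of_le hq with hqb | hqb
    · rw [coeff_eq_zero_of_natDegree_lt hqb, mul_zero, coeff_eq_zero_of_natDegree_lt]
      exact lt_of_le_of_lt natDegree_mul_le (by omega)
    · subst hpa hqb
      exact coeff_mul_degree_add_degree p q

lemma coeff_prod_of_natDegree_le {ι : Type*} (s : Finset ι) (F : ι → k[X]) (m : ι → ℕ)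
    (h : ∀ i ∈ s, (F i).natDegree ≤ m i) :
    (∏ i ∈ s, F i).coeff (∑ i ∈ s, m i) = ∏ i ∈ s, (F i).coeff (m i) := by
  induction s using Finset.cons_induction with
  | empty => simp
  | cons i s his ih =>
    rw [Finset.prod_cons, Finset.sum_cons, Finset.prod_cons,
      coeff_mul_of_natDegree_le (h i (Finset.mem_cons_self i s))
        (le_trans (natDegree_prod_le s F)
          (Finset.sum_le_sum fun j hj => h j (Finset.mem_cons_of_mem hj))),
      ih fun j hj => h j (Finset.mem_cons_of_mem hj)]

lemma coeff_pow_of_natDegree_le {p : k[X]} {e : ℕ} (hp : p.natDegree ≤ e) (m : ℕ) :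
    (p ^ m).coeff (m * e) = (p.coeff e) ^ m := by
  have h := coeff_prod_of_natDegree_le (Finset.range m) (fun _ => p) (fun _ => e)
    (fun _ _ => hp)
  simpa [Finset.prod_const, Finset.sum_const, Nat.smul_one_eq_cast] using h

lemma support_degree_eq {N d : ℕ} {φ : MvPolynomial (Fin N) k} (hφ : φ.IsHomogeneous d)
    {α : Fin N →₀ ℕ} (hα : α ∈ φ.support) : ∑ i ∈ α.support, α i = d := by
  by_contra h
  exact (MvPolynomial.mem_support_iff.mp hα) (hφ.coeff_eq_zero h)

lemma keyDeg {N d : ℕ} (φ : MvPolynomial (Fin N) k) (hφ : φ.IsHomogeneous d)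
    (p : Fin N → k[X]) (e : ℕ) (hp : ∀ i, (p i).natDegree ≤ e) :
    (MvPolynomial.aeval p φ : k[X]).natDegree ≤ d * e := by
  rw [MvPolynomial.aeval_def, MvPolynomial.eval₂_eq]
  apply natDegree_sum_le_of_forall_le
  intro α hα
  refine le_trans natDegree_mul_le ?_
  have h1 : ((algebraMap k k[X]) (MvPolynomial.coeff α φ)).natDegree = 0 := natDegree_C _
  rw [h1, zero_add]
  refine le_trans (natDegree_prod_le α.support fun i => (p i) ^ (α i)) ?_
  calc ∑ i ∈ α.support, ((p i) ^ (α i)).natDegree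
      ≤ ∑ i ∈ α.support, (α i) * e := by
        refine Finset.sum_le_sum fun i _ => ?_
        rw [natDegree_pow]
        exact Nat.mul_le_mul_left _ (hp i)
    _ = (∑ i ∈ α.support, α i) * e := by rw [Finset.sum_mul]
    _ = d * e := by rw [support_degree_eq hφ hα]

lemma keyCoeff {N d : ℕ} (φ : MvPolynomial (Fin N) k) (hφ : φ.IsHomogeneous d)
    (p : Fin N → k[X]) (e : ℕ) (hp : ∀ i, (p i).natDegree ≤ e) :
    (MvPolynomial.aeval p φ : k[X]).coeff (d * e)
      = MvPolynomial.eval (fun i => (p i).coeff e) φ := by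
  rw [MvPolynomial.aeval_def, MvPolynomial.eval₂_eq, MvPolynomial.eval_eq, finset_sum_coeff]
  refine Finset.sum_congr rfl fun α hα => ?_
  have halg : (algebraMap k k[X]) (MvPolynomial.coeff α φ) = C (MvPolynomial.coeff α φ) := rfl
  rw [halg, coeff_C_mul]
  congr 1
  have hde : d * e = ∑ i ∈ α.support, (α i) * e := by
    rw [← Finset.sum_mul, support_degree_eq hφ hα]
  rw [hde, coeff_prod_of_natDegree_le]
  · exact Finset.prod_congr rfl fun i _ => coeff_pow_of_natDegree_le (hp i) (α i)
  · intro i _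
    rw [natDegree_pow]
    exact Nat.mul_le_mul_left _ (hp i)

lemma eval_smul_homog {S : Type*} [CommRing S] {σ : Type*} {ψ : MvPolynomial σ S} {d : ℕ}
    (hψ : ψ.IsHomogeneous d) (a : S) (w : σ → S) :
    MvPolynomial.eval (fun i => a * w i) ψ = a ^ d * MvPolynomial.eval w ψ := by
  rw [MvPolynomial.eval_eq, MvPolynomial.eval_eq, Finset.mul_sum]
  refine Finset.sum_congr rfl fun α hα => ?_
  have hdeg : ∑ i ∈ α.support, α i = d := by
    by_contra h
    exact (MvPolynomial.mem_support_iff.mp hα) (hψ.coeff_eq_zero h)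
  have : ∏ i ∈ α.support, (a * w i) ^ (α i)
      = a ^ d * ∏ i ∈ α.support, (w i) ^ (α i) := by
    rw [← hdeg, ← Finset.prod_pow_eq_pow_sum, ← Finset.prod_mul_distrib]
    exact Finset.prod_congr rfl fun i _ => mul_pow _ _ _
  rw [this]
  ring

end MainThmAux

open MainThmAux in
/-- **Corollary (both degrees prime).** Let `k` be a field, `d ≥ 3` prime, and `φ` a
degree-`d` form in `N+1` variables over `k`. If `φ` is isotropic over a finite extension
`K/k` of prime degree `n ≥ 2` with `n ≠ d`, then `φ` is isotropic over some finite
extension `L/k` with `gcd([L:k], nd) = 1` and `[L:k] ≤ nd - n - d`. -/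
theorem main_theorem_primes (k : Type) [Field k] (d N n : ℕ)
    (hd : 3 ≤ d) (hdp : Nat.Prime d) (hn : 2 ≤ n) (hnp : Nat.Prime n) (hnd : n ≠ d)
    (φ : MvPolynomial (Fin (N + 1)) k) (hφ : φ.IsHomogeneous d)
    (K : Type) [Field K] [Algebra k K] [FiniteDimensional k K]
    (hKdeg : Module.finrank k K = n)
    (hiso : ∃ w : Fin (N + 1) → K, w ≠ 0 ∧
      MvPolynomial.eval w (MvPolynomial.map (algebraMap k K) φ) = 0) :
    ∃ (L : Type) (_ : Field L) (_ : Algebra k L),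
      FiniteDimensional k L ∧
      Nat.gcd (Module.finrank k L) (n * d) = 1 ∧
      Module.finrank k L ≤ n * d - n - d ∧
      ∃ w : Fin (N + 1) → L, w ≠ 0 ∧
        MvPolynomial.eval w (MvPolynomial.map (algebraMap k L) φ) = 0 := by
  -- the bound is at least 1
  have hbound1 : 1 ≤ n * d - n - d := by
    have h1 : n * d = n * (d - 1) + n := by
      rw [← Nat.mul_succ]
      congr 1
      omega
    have h2 : 2 * (d - 1) ≤ n * (d - 1) := Nat.mul_le_mul_right _ hn
    have h3 : d - 1 + 1 = d := by omega
    rw [Nat.sub_sub]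
    apply Nat.le_sub_of_add_le
    linarith
  -- Case 1: φ is isotropic over k itself.
  by_cases hk : ∃ v : Fin (N + 1) → k, v ≠ 0 ∧ MvPolynomial.eval v φ = 0
  · obtain ⟨v, hv0, hv⟩ := hk
    refine ⟨k, inferInstance, inferInstance, inferInstance, ?_, ?_, v, hv0, ?_⟩
    · rw [Module.finrank_self]; exact Nat.gcd_one_left _
    · rw [Module.finrank_self]; exact hbound1
    · rwa [Algebra.algebraMap_self, MvPolynomial.map_id]
  -- anisotropy over k
  push_neg at hk
  have haniso : ∀ v : Fin (N + 1) → k, MvPolynomial.eval v φ = 0 → v = 0 := by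
    intro v hv
    by_contra hv0
    exact (hk v hv0) hv
  obtain ⟨w, hw0, hw⟩ := hiso
  -- find a primitive element θ of K
  have hbot : (⊥ : Subalgebra k K) ≠ ⊤ := by
    intro h
    have := Subalgebra.bot_eq_top_iff_finrank_eq_one.mp h
    omega
  obtain ⟨θ, hθ⟩ : ∃ θ : K, θ ∉ (⊥ : Subalgebra k K) := by
    by_contra h
    push_neg at h
    exact hbot (eq_top_iff.mpr fun x _ => h x)
  have hint : IsIntegral k θ := IsIntegral.of_finite k θ
  have hθrange : θ ∉ (algebraMap k K).range := by
    intro h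
    exact hθ (Algebra.mem_bot.mpr h)
  have h2le : 2 ≤ (minpoly k θ).natDegree := (minpoly.two_le_natDegree_iff hint).mpr hθrange
  have hdvdn : (minpoly k θ).natDegree ∣ n := hKdeg ▸ minpoly.degree_dvd hint
  have hmindeg : (minpoly k θ).natDegree = n := by
    rcases (Nat.Prime.eq_one_or_self_of_dvd hnp _ hdvdn) with h | h
    · omega
    · exact h
  set f := minpoly k θ with hf
  have hf0 : f ≠ 0 := minpoly.ne_zero hint
  -- every element of K is a polynomial in θ of degree ≤ n - 1
  haveI : Module.Finite k (Polynomial.degreeLT k n : Submodule k k[X]) :=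
    Module.Finite.equiv (Polynomial.degreeLTEquiv k n).symm
  have hfr : Module.finrank k (Polynomial.degreeLT k n : Submodule k k[X])
      = Module.finrank k K := by
    rw [hKdeg, (Polynomial.degreeLTEquiv k n).finrank_eq, Module.finrank_fin_fun]
  let ρ : (Polynomial.degreeLT k n : Submodule k k[X]) →ₗ[k] K :=
    (Polynomial.aeval θ).toLinearMap.comp (Submodule.subtype _)
  have hρinj : Function.Injective ρ := by
    rw [injective_iff_map_eq_zero]
    rintro ⟨P, hP⟩ hzero
    have hPθ : Polynomial.aeval θ P = 0 := hzero
    refine Subtype.ext (show P = 0 from ?_)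
    by_contra hP0
    have h1 := minpoly.degree_le_of_ne_zero k θ hP0 hPθ
    have h2 : P.degree < (n : ℕ) := Polynomial.mem_degreeLT.mp hP
    have h3 : f.degree = (n : ℕ) := by
      rw [Polynomial.degree_eq_natDegree hf0, hmindeg]
    rw [← hf, h3] at h1
    exact absurd (lt_of_le_of_lt h1 h2) (lt_irrefl _)
  have hρsurj : Function.Surjective ρ :=
    (LinearMap.injective_iff_surjective_of_finrank_eq_finrank hfr).mp hρinj
  have rep : ∀ x : K, ∃ P : k[X], P.natDegree ≤ n - 1 ∧ Polynomial.aeval θ P = x := by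
    intro x
    obtain ⟨⟨P, hP⟩, hPx⟩ := hρsurj x
    refine ⟨P, ?_, hPx⟩
    have hdeg := Polynomial.mem_degreeLT.mp hP
    rcases eq_or_ne P 0 with rfl | h0
    · simp
    · have := (Polynomial.natDegree_lt_iff_degree_lt h0).mpr hdeg
      omega
  choose P hPdeg hPw using fun i => rep (w i)
  -- extract a maximal common divisor
  obtain ⟨j, hj⟩ : ∃ j, w j ≠ 0 := Function.ne_iff.mp hw0
  have hPj : P j ≠ 0 := by
    intro h
    exact hj (by rw [← hPw j, h, map_zero])
  set S : Set ℕ := {m : ℕ | ∃ h : k[X], (∀ i, h ∣ P i) ∧ h.natDegree = m} with hS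
  have hSne : S.Nonempty := ⟨0, 1, fun i => one_dvd _, natDegree_one⟩
  have hSbdd : BddAbove S := by
    refine ⟨(P j).natDegree, ?_⟩
    rintro m ⟨h, hh, rfl⟩
    exact Polynomial.natDegree_le_of_dvd (hh j) hPj
  obtain ⟨G, hGdvd, hGdeg⟩ := Nat.sSup_mem hSne hSbdd
  have hGmax : ∀ h : k[X], (∀ i, h ∣ P i) → h.natDegree ≤ G.natDegree := by
    intro h hh
    rw [hGdeg]
    exact le_csSup hSbdd ⟨h, hh, rfl⟩
  have hG0 : G ≠ 0 := by
    intro h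
    exact hPj (zero_dvd_iff.mp (h ▸ hGdvd j))
  choose p hp using hGdvd
  -- no irreducible polynomial divides all the p i
  have hnocommon : ∀ q : k[X], Irreducible q → (∀ i, q ∣ p i) → False := by
    intro q hq hqd
    have h1 : ∀ i, G * q ∣ P i := fun i => (hp i) ▸ mul_dvd_mul_left G (hqd i)
    have h2 := hGmax (G * q) h1
    have h3 : 0 < q.natDegree := hq.natDegree_pos
    rw [natDegree_mul hG0 hq.ne_zero] at h2
    omega
  have hdegp : ∀ i, (p i).natDegree ≤ n - 1 := by
    intro i
    rcases eq_or_ne (p i) 0 with h0 | h0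
    · rw [h0]; simp
    · have := hPdeg i
      rw [hp i, natDegree_mul hG0 h0] at this
      omega
  -- θ-evaluations
  set Gθ := Polynomial.aeval θ G with hGθdef
  have hwi : ∀ i, Gθ * Polynomial.aeval θ (p i) = w i := by
    intro i
    rw [← map_mul, ← hp i, hPw i]
  have hGθ0 : Gθ ≠ 0 := by
    intro h
    exact hj (by rw [← hwi j, h, zero_mul])
  -- the one-variable polynomial F
  set F : k[X] := MvPolynomial.aeval p φ with hFdef
  set e : ℕ := Finset.univ.sup (fun i => (p i).natDegree) with he
  have hpe : ∀ i, (p i).natDegree ≤ e := fun i =>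
    Finset.le_sup (f := fun i => (p i).natDegree) (Finset.mem_univ i)
  have hen : e ≤ n - 1 := Finset.sup_le fun i _ => hdegp i
  set c : Fin (N + 1) → k := fun i => (p i).coeff e with hc
  have hcoeff : F.coeff (d * e) = MvPolynomial.eval c φ := keyCoeff φ hφ p e hpe
  have hFdegle : F.natDegree ≤ d * e := keyDeg φ hφ p e hpe
  -- F(θ) = 0
  have hFθ : Polynomial.aeval θ F = 0 := by
    rw [hFdef, MvPolynomial.comp_aeval_apply]
    have hv : (fun i => Polynomial.aeval θ (p i)) = fun i => Gθ⁻¹ * w i := by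
      funext i
      rw [← hwi i]
      field_simp
    rw [hv, MvPolynomial.aeval_def, ← MvPolynomial.eval_map,
      eval_smul_homog (hφ.map (algebraMap k K)) (Gθ⁻¹) w, hw, mul_zero]
  -- e is positive
  have hcne : c ≠ 0 → MvPolynomial.eval c φ ≠ 0 := by
    intro hc0 habs
    exact hc0 (haniso c habs)
  have hpnonzero : ¬(∀ i, p i = 0) := by
    intro h
    apply hj
    rw [← hwi j, h j, map_zero, mul_zero]
  have hepos : 1 ≤ e := by
    by_contra h
    push_neg at h
    have he0 : e = 0 := by omega
    have hFdegle' : F.natDegree ≤ 0 := by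
      have := hFdegle
      rw [he0, Nat.mul_zero] at this
      exact this
    have hFconst : F = C (F.coeff 0) := Polynomial.eq_C_of_natDegree_le_zero hFdegle'
    have hF00 : F.coeff 0 = 0 := by
      have h1 := hFθ
      rw [hFconst] at h1
      simp only [Polynomial.aeval_C] at h1
      exact (map_eq_zero_iff _ (RingHom.injective (algebraMap k K))).mp h1
    have hc0 : c = 0 := by
      apply haniso
      rw [← hcoeff, he0, Nat.mul_zero]
      exact hF00
    apply hpnonzero
    intro i
    have h1 : p i = C ((p i).coeff 0) := by
      apply Polynomial.eq_C_of_natDegree_le_zero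
      have := hpe i
      omega
    have h2 : (p i).coeff 0 = 0 := by
      have h3 := congrFun hc0 i
      rw [hc] at h3
      rw [he0] at h3
      exact h3
    rw [h1, h2, map_zero]
  -- the leading coefficient of F is nonzero
  obtain ⟨i₀, -, hi₀⟩ := Finset.exists_mem_eq_sup Finset.univ
    ⟨0, Finset.mem_univ 0⟩ (fun i => (p i).natDegree)
  rw [← he] at hi₀
  have hpi₀ : p i₀ ≠ 0 := by
    intro h
    rw [h] at hi₀
    simp only [natDegree_zero] at hi₀
    omega
  have hci₀ : c i₀ ≠ 0 := by
    show (p i₀).coeff e ≠ 0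
    rw [hi₀]
    exact Polynomial.leadingCoeff_ne_zero.mpr hpi₀
  have hcne0 : c ≠ 0 := fun h => hci₀ (congrFun h i₀)
  have hφc : MvPolynomial.eval c φ ≠ 0 := hcne hcne0
  have hFcoeffne : F.coeff (d * e) ≠ 0 := by rw [hcoeff]; exact hφc
  have hF0 : F ≠ 0 := fun h => hFcoeffne (by rw [h]; simp)
  have hFdeg : F.natDegree = d * e :=
    le_antisymm hFdegle (Polynomial.le_natDegree_of_ne_zero hFcoeffne)
  -- F is divisible by the minimal polynomial f
  obtain ⟨g, hFg⟩ : f ∣ F := minpoly.dvd k θ hFθ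
  have hg0 : g ≠ 0 := by
    rintro rfl
    rw [mul_zero] at hFg
    exact hF0 hFg
  have hdegg : n + g.natDegree = d * e := by
    rw [← hFdeg, hFg, natDegree_mul hf0 hg0, hmindeg]
  have cop : Nat.Coprime d n := (Nat.coprime_primes hdp hnp).mpr (Ne.symm hnd)
  -- find a good irreducible factor of g
  have hgood : ∃ q : k[X], Irreducible q ∧ q ∣ g ∧ ¬ n ∣ q.natDegree ∧ ¬ d ∣ q.natDegree := by
    by_contra hbad
    push_neg at hbad
    set T := UniqueFactorizationMonoid.factors g with hT
    have h0T : (0 : k[X]) ∉ T := fun h =>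
      (UniqueFactorizationMonoid.irreducible_of_factor 0 h).ne_zero rfl
    obtain ⟨u, hu⟩ := UniqueFactorizationMonoid.factors_prod hg0
    have hprodne : T.prod ≠ 0 := Multiset.prod_ne_zero h0T
    have hsum : (T.map natDegree).sum = g.natDegree := by
      rw [← Polynomial.natDegree_multiset_prod T h0T, ← hu,
        natDegree_mul hprodne (Units.ne_zero u),
        natDegree_eq_zero_of_isUnit u.isUnit, add_zero]
    set T1 := T.filter (fun q => d ∣ q.natDegree) with hT1
    set T2 := T.filter (fun q => ¬ d ∣ q.natDegree) with hT2
    have hsplit : (T1.map natDegree).sum + (T2.map natDegree).sum = g.natDegree := by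
      rw [← hsum, ← Multiset.sum_add, ← Multiset.map_add, Multiset.filter_add_not]
    have hdA : d ∣ (T1.map natDegree).sum := by
      apply Multiset.dvd_sum
      intro x hx
      obtain ⟨q, hq, rfl⟩ := Multiset.mem_map.mp hx
      exact (Multiset.mem_filter.mp hq).2
    have hnB : n ∣ (T2.map natDegree).sum := by
      apply Multiset.dvd_sum
      intro x hx
      obtain ⟨q, hq, rfl⟩ := Multiset.mem_map.mp hx
      obtain ⟨hqT, hqnd⟩ := Multiset.mem_filter.mp hq
      by_contra hnn
      exact hqnd (hbad q (UniqueFactorizationMonoid.irreducible_of_factor q hqT)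
        (UniqueFactorizationMonoid.dvd_of_mem_factors hqT) hnn)
    obtain ⟨a, ha⟩ := hdA
    obtain ⟨b, hb⟩ := hnB
    have key : d * a + n * b = g.natDegree := by rw [← ha, ← hb]; exact hsplit
    have hkey2 : d * a + n * (b + 1) = d * e := by
      have : n * (b + 1) = n * b + n := by ring
      linarith [hdegg]
    have hdd : d ∣ n * (b + 1) := by
      have h8 : d ∣ d * a + n * (b + 1) := by
        rw [hkey2]
        exact Dvd.intro e rfl
      exact (Nat.dvd_add_right (Dvd.intro a rfl)).mp h8
    have hdb : d ∣ b + 1 := (Nat.Coprime.dvd_of_dvd_mul_left cop hdd)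
    obtain ⟨s, hs⟩ := hdb
    have hs1 : 1 ≤ s := by
      rcases Nat.eq_zero_or_pos s with rfl | h
      · rw [Nat.mul_zero] at hs; omega
      · exact h
    have hea : d * (a + n * s) = d * e := by
      calc d * (a + n * s) = d * a + n * (d * s) := by ring
        _ = d * a + n * (b + 1) := by rw [← hs]
        _ = d * a + (n * b + n) := by ring
        _ = d * e := hkey2
    have hea' : a + n * s = e := Nat.eq_of_mul_eq_mul_left (by omega) hea
    have hns : n ≤ n * s := Nat.le_mul_of_pos_right n hs1
    have hne2 : n ≤ e := by linarith
    omega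
  obtain ⟨q, hqirr, hqg, hqn, hqd2⟩ := hgood
  have hqF : q ∣ F := dvd_trans hqg (by rw [hFg]; exact dvd_mul_left g f)
  -- bound on the degree of q
  have hqdegle : q.natDegree ≤ n * d - n - d := by
    have h1 : q.natDegree ≤ g.natDegree := Polynomial.natDegree_le_of_dvd hqg hg0
    have h2 : d * e ≤ d * (n - 1) := Nat.mul_le_mul_left d hen
    have h3 : d * (n - 1) + d = d * n := by
      rw [← Nat.mul_succ]
      congr 1
      omega
    rw [Nat.mul_comm n d, Nat.sub_sub]
    apply Nat.le_sub_of_add_le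
    linarith [hdegg]
  -- coprimality
  have hcop : Nat.Coprime q.natDegree (n * d) := by
    have c1 : Nat.Coprime q.natDegree n :=
      ((Nat.Prime.coprime_iff_not_dvd hnp).mpr hqn).symm
    have c2 : Nat.Coprime q.natDegree d :=
      ((Nat.Prime.coprime_iff_not_dvd hdp).mpr hqd2).symm
    exact Nat.Coprime.mul_right c1 c2
  -- assemble the extension L = k[X]/(q)
  haveI : Fact (Irreducible q) := ⟨hqirr⟩
  have hq0 : q ≠ 0 := hqirr.ne_zero
  refine ⟨AdjoinRoot q, inferInstance, inferInstance, ?_, ?_, ?_, ?_⟩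
  · exact Module.Finite.of_basis (AdjoinRoot.powerBasis hq0).basis
  · rw [(AdjoinRoot.powerBasis hq0).finrank, AdjoinRoot.powerBasis_dim]
    exact hcop
  · rw [(AdjoinRoot.powerBasis hq0).finrank, AdjoinRoot.powerBasis_dim]
    exact hqdegle
  · refine ⟨fun i => Polynomial.aeval (AdjoinRoot.root q) (p i), ?_, ?_⟩
    · intro h
      apply hnocommon q hqirr
      intro i
      have h1 : Polynomial.aeval (AdjoinRoot.root q) (p i) = 0 := congrFun h i
      rwa [AdjoinRoot.aeval_eq, AdjoinRoot.mk_eq_zero] at h1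
    · have h1 : MvPolynomial.eval (fun i => Polynomial.aeval (AdjoinRoot.root q) (p i))
          (MvPolynomial.map (algebraMap k (AdjoinRoot q)) φ)
          = Polynomial.aeval (AdjoinRoot.root q) F := by
        rw [hFdef, MvPolynomial.comp_aeval_apply, MvPolynomial.aeval_def,
          MvPolynomial.eval_map]
      rw [h1, AdjoinRoot.aeval_eq, AdjoinRoot.mk_eq_zero]
      exact hqF
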